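/- Let Y₁, ..., Y_m be independent Bernoulli random variables with parameters p₁, ..., p_m satisfying Σ_s p_s ≥ 1, and values v₁, ..., v_m ≥ 0. Then min_{B ≥ 0} (B + Σ_s p_s (v_s - B)⁺) ≤ (1/(1 - 1/e)) · E[max_s Y_s v_s]. -/
import Mathlib

open Finset

/-- Expected value of `max_{s ∈ A} v s` (with `max ∅ = 0`) where each index `s`
is included in `A` independently with probability `p s`. -/
noncomputable def expectedMax {m : ℕ} (p v : Fin m → ℝ) : ℝ :=
  ∑ A : Finset (Fin m),
    (∏ s ∈ A, p s) * (∏ s ∈ Aᶜ, (1 - p s)) * (A.fold max 0 v)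

noncomputable def Pw (p : Fin m → ℝ) (A : Finset (Fin m)) : ℝ :=
  (∏ s ∈ A, p s) * ∏ s ∈ Aᶜ, (1 - p s)

lemma expectedMax_eq (p v : Fin m → ℝ) :
    expectedMax p v = ∑ A : Finset (Fin m), Pw p A * A.fold max 0 v := rfl

lemma sumPw (p : Fin m → ℝ) : ∑ A : Finset (Fin m), Pw p A = 1 := by
  have h := Fintype.prod_add p (fun s => 1 - p s)
  simp only [Pw]; rw [← h]; simp

lemma emptyInterPw (p : Fin m → ℝ) (S : Finset (Fin m)) :
    ∑ A ∈ Finset.univ.filter (fun A : Finset (Fin m) => A ∩ S = ∅), Pw p A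
      = ∏ s ∈ S, (1 - p s) := by
  have hset : Finset.univ.filter (fun A : Finset (Fin m) => A ∩ S = ∅) = Sᶜ.powerset := by
    ext A
    simp [Finset.mem_powerset, ← Finset.disjoint_iff_inter_eq_empty,
      Finset.subset_compl_comm, Finset.disjoint_left, Finset.subset_iff]
  rw [hset]
  have key : ∀ A ∈ Sᶜ.powerset, Pw p A
      = (∏ s ∈ S, (1 - p s)) * ((∏ s ∈ A, p s) * ∏ s ∈ Sᶜ \ A, (1 - p s)) := by
    intro A hA
    rw [Finset.mem_powerset] at hA
    have hAc : Aᶜ = S ∪ (Sᶜ \ A) := by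
      ext x
      simp only [Finset.mem_compl, Finset.mem_union, Finset.mem_sdiff]
      by_cases hx : x ∈ S
      · simp [hx]; intro hxa; exact absurd (hA hxa) (by simp [hx])
      · simp [hx]
    have hdisj : Disjoint S (Sᶜ \ A) :=
      Finset.disjoint_of_subset_right (Finset.sdiff_subset) disjoint_compl_right
    rw [Pw, hAc, Finset.prod_union hdisj]
    ring
  rw [Finset.sum_congr rfl key, ← Finset.mul_sum]
  have : ∑ A ∈ Sᶜ.powerset, (∏ s ∈ A, p s) * ∏ s ∈ Sᶜ \ A, (1 - p s) = 1 := by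
    rw [← Finset.prod_add]
    simp
  rw [this, mul_one]

lemma nonemptyInterPw (p : Fin m → ℝ) (S : Finset (Fin m)) :
    ∑ A : Finset (Fin m), Pw p A * (if (A ∩ S).Nonempty then 1 else 0)
      = 1 - ∏ s ∈ S, (1 - p s) := by
  have hsplit : ∀ A : Finset (Fin m),
      Pw p A * (if (A ∩ S).Nonempty then 1 else 0)
        = Pw p A - Pw p A * (if A ∩ S = ∅ then 1 else 0) := by
    intro A
    by_cases h : (A ∩ S).Nonempty
    · rw [if_pos h, if_neg h.ne_empty]; ring
    · rw [Finset.not_nonempty_iff_eq_empty] at h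
      rw [if_neg (by simp [h]), if_pos h]; ring
  rw [Finset.sum_congr rfl (fun A _ => hsplit A), Finset.sum_sub_distrib, sumPw]
  congr 1
  rw [← emptyInterPw p S, Finset.sum_filter]
  exact Finset.sum_congr rfl (fun A _ => by split <;> ring)

lemma foldMax_nonneg (v : Fin m → ℝ) (A : Finset (Fin m)) : 0 ≤ A.fold max 0 v := by
  rw [Finset.le_fold_max]; left; rfl

lemma foldMax_zero {v : Fin m → ℝ} {A : Finset (Fin m)} (h : ∀ s ∈ A, v s = 0) :
    A.fold max 0 v = 0 := by
  refine le_antisymm ?_ (foldMax_nonneg v A)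
  rw [Finset.fold_max_le]
  exact ⟨le_rfl, fun x hx => (h x hx).le⟩

lemma foldMax_decomp {v : Fin m → ℝ} {θ : ℝ} (hθ : 0 < θ)
    (hv : ∀ s, 0 ≤ v s) (hmin : ∀ s, 0 < v s → θ ≤ v s) (A : Finset (Fin m)) :
    A.fold max 0 v = A.fold max 0 (fun s => if 0 < v s then v s - θ else 0)
      + θ * (if (A ∩ Finset.univ.filter (fun s => 0 < v s)).Nonempty then 1 else 0) := by
  set v' : Fin m → ℝ := fun s => if 0 < v s then v s - θ else 0 with hv'
  set supp := Finset.univ.filter (fun s : Fin m => 0 < v s) with hsupp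
  induction A using Finset.induction with
  | empty => simp
  | @insert a A ha ih =>
    rw [Finset.fold_insert ha, Finset.fold_insert ha, ih]
    by_cases hva : 0 < v a
    · have hva' : v' a = v a - θ := by simp [hv', hva]
      have hind : ((insert a A) ∩ supp).Nonempty :=
        ⟨a, by simp [hsupp, hva]⟩
      rw [hva', if_pos hind]
      by_cases hA : (A ∩ supp).Nonempty
      · rw [if_pos hA, mul_one]
        have hrw : v a = (v a - θ) + θ := by ring
        conv_lhs => rw [hrw]
        rw [max_add_add_right]
      · rw [if_neg hA, mul_zero, add_zero, mul_one]
        have hzero : A.fold max 0 v' = 0 := by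
          apply foldMax_zero
          intro s hs
          have : s ∉ supp := fun hmem => hA ⟨s, Finset.mem_inter.2 ⟨hs, hmem⟩⟩
          simp only [hsupp, Finset.mem_filter, Finset.mem_univ, true_and] at this
          simp [hv', this]
        rw [hzero]
        have h1 : θ ≤ v a := hmin a hva
        rw [max_eq_left (by linarith : (0:ℝ) ≤ v a - θ), max_eq_left (by linarith)]
        ring
    · have hva0 : v a = 0 := le_antisymm (not_lt.1 hva) (hv a)
      have hva' : v' a = 0 := by simp [hv', hva]
      have hind : (insert a A) ∩ supp = A ∩ supp := by
        ext x
        simp only [Finset.mem_inter, Finset.mem_insert, hsupp, Finset.mem_filter,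
          Finset.mem_univ, true_and]
        constructor
        · rintro ⟨hx | hx, hpos⟩
          · exact absurd (hx ▸ hpos) hva
          · exact ⟨hx, hpos⟩
        · rintro ⟨hx, hpos⟩; exact ⟨Or.inr hx, hpos⟩
      rw [hva0, hva', hind]
      have h1 : 0 ≤ A.fold max 0 v' := foldMax_nonneg v' A
      have h2 : (0:ℝ) ≤ θ * (if (A ∩ supp).Nonempty then 1 else 0) := by
        positivity
      rw [max_eq_right (by linarith), max_eq_right h1]

lemma one_sub_prod_ge {q : Fin m → ℝ} {S : Finset (Fin m)}
    (h0 : ∀ s, 0 ≤ q s) (h1 : ∀ s, q s ≤ 1) (hs : ∑ s ∈ S, q s ≤ 1) :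
    (1 - 1 / Real.exp 1) * ∑ s ∈ S, q s ≤ 1 - ∏ s ∈ S, (1 - q s) := by
  set x := ∑ s ∈ S, q s with hx
  have hx0 : 0 ≤ x := Finset.sum_nonneg fun s _ => h0 s
  have hprod : ∏ s ∈ S, (1 - q s) ≤ Real.exp (-x) := by
    rw [hx, ← Finset.sum_neg_distrib, Real.exp_sum]
    apply Finset.prod_le_prod
    · intro s _; linarith [h1 s]
    · intro s _; linarith [Real.add_one_le_exp (-q s)]
  have hconv : Real.exp (-x) ≤ 1 - (1 - Real.exp (-1)) * x := by
    have h := convexOn_exp.2 (Set.mem_univ (0:ℝ)) (Set.mem_univ (-1:ℝ))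
      (by linarith : (0:ℝ) ≤ 1 - x) hx0 (by ring)
    simp only [smul_eq_mul, mul_zero, Real.exp_zero, mul_neg, mul_one] at h
    rw [zero_add] at h
    nlinarith [h]
  have he : 1 / Real.exp 1 = Real.exp (-1) := by
    rw [Real.exp_neg, one_div]
  rw [he]
  nlinarith [hprod, hconv]

lemma expectedMax_ge {q : Fin m → ℝ} (hq0 : ∀ s, 0 ≤ q s) (hq1 : ∀ s, q s ≤ 1)
    (hsum : ∑ s, q s ≤ 1) :
    ∀ (n : ℕ) (v : Fin m → ℝ),
      ((Finset.image v Finset.univ).filter (fun t => 0 < t)).card = n →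
      (∀ s, 0 ≤ v s) →
      (1 - 1 / Real.exp 1) * ∑ s, q s * v s ≤ expectedMax q v := by
  intro n
  induction n using Nat.strong_induction_on with
  | _ n ih =>
  intro v hcard hv
  by_cases hpos : ((Finset.image v Finset.univ).filter (fun t => 0 < t)).Nonempty
  · set W := (Finset.image v Finset.univ).filter (fun t => 0 < t) with hW
    set θ := W.min' hpos with hθdef
    have hθW : θ ∈ W := Finset.min'_mem _ _
    have hθpos : 0 < θ := (Finset.mem_filter.1 hθW).2
    have hmin : ∀ s, 0 < v s → θ ≤ v s := by
      intro s hs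
      apply Finset.min'_le
      exact Finset.mem_filter.2 ⟨Finset.mem_image.2 ⟨s, Finset.mem_univ s, rfl⟩, hs⟩
    have hv'0 : ∀ s, 0 ≤ (fun s => if 0 < v s then v s - θ else 0) s := by
      intro s; dsimp only; split
      · linarith [hmin s ‹_›]
      · exact le_rfl
    have hdecomp : expectedMax q v
        = expectedMax q (fun s => if 0 < v s then v s - θ else 0)
          + θ * (1 - ∏ s ∈ Finset.univ.filter (fun s => 0 < v s), (1 - q s)) := by
      have h1 : ∀ A : Finset (Fin m), Pw q A * A.fold max 0 v
          = Pw q A * A.fold max 0 (fun s => if 0 < v s then v s - θ else 0)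
            + θ * (Pw q A * (if (A ∩ Finset.univ.filter (fun s => 0 < v s)).Nonempty
                then 1 else 0)) := by
        intro A; rw [foldMax_decomp hθpos hv hmin A]; ring
      rw [expectedMax_eq, expectedMax_eq, Finset.sum_congr rfl (fun A _ => h1 A),
        Finset.sum_add_distrib, ← Finset.mul_sum, nonemptyInterPw]
    have hn : 0 < n := hcard ▸ Finset.card_pos.2 hpos
    have hsub : (Finset.image (fun s => if 0 < v s then v s - θ else 0) Finset.univ).filter
          (fun t => 0 < t) ⊆ (W.erase θ).image (fun t => t - θ) := by
      intro t ht
      rcases Finset.mem_filter.1 ht with ⟨htim, htpos⟩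
      rcases Finset.mem_image.1 htim with ⟨s, _, rfl⟩
      by_cases hs : 0 < v s
      · have heq : (if 0 < v s then v s - θ else 0) = v s - θ := if_pos hs
        rw [heq] at htpos ⊢
        refine Finset.mem_image.2 ⟨v s, ?_, rfl⟩
        refine Finset.mem_erase.2 ⟨?_, ?_⟩
        · intro h; rw [h] at htpos; linarith
        · exact Finset.mem_filter.2 ⟨Finset.mem_image.2 ⟨s, Finset.mem_univ s, rfl⟩, hs⟩
      · rw [if_neg hs] at htpos; exact absurd htpos (lt_irrefl 0)
    have hcard' : ((Finset.image (fun s => if 0 < v s then v s - θ else 0)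
        Finset.univ).filter (fun t => 0 < t)).card < n := by
      calc ((Finset.image (fun s => if 0 < v s then v s - θ else 0)
            Finset.univ).filter (fun t => 0 < t)).card
          ≤ ((W.erase θ).image (fun t => t - θ)).card := Finset.card_le_card hsub
        _ ≤ (W.erase θ).card := Finset.card_image_le
        _ = n - 1 := by rw [Finset.card_erase_of_mem hθW, hcard]
        _ < n := Nat.sub_lt hn one_pos
    have hIH := ih _ hcard' (fun s => if 0 < v s then v s - θ else 0) rfl hv'0
    have hsuppsum : ∑ s ∈ Finset.univ.filter (fun s : Fin m => 0 < v s), q s ≤ 1 :=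
      le_trans (Finset.sum_le_sum_of_subset_of_nonneg (Finset.subset_univ _)
        (fun i _ _ => hq0 i)) hsum
    have hprod := one_sub_prod_ge hq0 hq1 hsuppsum
    have hcomb : (∑ s, q s * (if 0 < v s then v s - θ else 0))
        + θ * ∑ s ∈ Finset.univ.filter (fun s : Fin m => 0 < v s), q s
        = ∑ s, q s * v s := by
      rw [Finset.sum_filter, Finset.mul_sum, ← Finset.sum_add_distrib]
      apply Finset.sum_congr rfl
      intro s _
      by_cases hs : 0 < v s
      · simp only [if_pos hs]; ring
      · have hz : v s = 0 := le_antisymm (not_lt.1 hs) (hv s)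
        simp [if_neg hs, hz]
    have h1 : θ * ((1 - 1 / Real.exp 1) * ∑ s ∈ Finset.univ.filter
          (fun s : Fin m => 0 < v s), q s)
        ≤ θ * (1 - ∏ s ∈ Finset.univ.filter (fun s : Fin m => 0 < v s), (1 - q s)) :=
      mul_le_mul_of_nonneg_left hprod hθpos.le
    have h2 : (1 - 1 / Real.exp 1) * ∑ s, q s * v s
        = (1 - 1 / Real.exp 1) * (∑ s, q s * (if 0 < v s then v s - θ else 0))
          + θ * ((1 - 1 / Real.exp 1) * ∑ s ∈ Finset.univ.filter
              (fun s : Fin m => 0 < v s), q s) := by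
      rw [← hcomb]; ring
    rw [hdecomp]
    linarith [hIH]
  · have hz : ∀ s, v s = 0 := by
      intro s
      by_contra h
      have hsp : 0 < v s := lt_of_le_of_ne (hv s) (Ne.symm h)
      exact hpos ⟨v s, Finset.mem_filter.2
        ⟨Finset.mem_image.2 ⟨s, Finset.mem_univ s, rfl⟩, hsp⟩⟩
    have hE : expectedMax q v = 0 := by
      rw [expectedMax_eq]
      apply Finset.sum_eq_zero
      intro A _
      rw [foldMax_zero (fun s _ => hz s), mul_zero]
    have hS : ∑ s, q s * v s = 0 := Finset.sum_eq_zero fun s _ => by rw [hz s, mul_zero]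
    rw [hE, hS, mul_zero]



lemma foldMax_insert_le (v : Fin m → ℝ) (A : Finset (Fin m)) (i : Fin m) :
    A.fold max 0 v ≤ (insert i A).fold max 0 v := by
  by_cases h : i ∈ A
  · rw [Finset.insert_eq_self.2 h]
  · rw [Finset.fold_insert h]; exact le_max_right _ _

lemma foldMax_nonneg' (v : Fin m → ℝ) (A : Finset (Fin m)) : 0 ≤ A.fold max 0 v := by
  rw [Finset.le_fold_max]; left; rfl

lemma expectedMax_update (g v : Fin m → ℝ) (i : Fin m) (c : ℝ) :
    expectedMax (Function.update g i c) v
      = ∑ A ∈ Finset.univ.filter (fun A : Finset (Fin m) => i ∉ A),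
          ((∏ s ∈ A, g s) * ∏ s ∈ Aᶜ.erase i, (1 - g s)) *
            ((1 - c) * A.fold max 0 v + c * (insert i A).fold max 0 v) := by
  set f := Function.update g i c with hf
  have hsplit : expectedMax f v
      = (∑ A ∈ Finset.univ.filter (fun A : Finset (Fin m) => i ∉ A),
          (∏ s ∈ A, f s) * (∏ s ∈ Aᶜ, (1 - f s)) * (A.fold max 0 v))
        + ∑ A ∈ Finset.univ.filter (fun A : Finset (Fin m) => ¬ i ∉ A),
          (∏ s ∈ A, f s) * (∏ s ∈ Aᶜ, (1 - f s)) * (A.fold max 0 v) := by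
    rw [expectedMax, Finset.sum_filter_add_sum_filter_not]
  rw [hsplit]
  have hbij : ∑ A ∈ Finset.univ.filter (fun A : Finset (Fin m) => ¬ i ∉ A),
        (∏ s ∈ A, f s) * (∏ s ∈ Aᶜ, (1 - f s)) * (A.fold max 0 v)
      = ∑ A ∈ Finset.univ.filter (fun A : Finset (Fin m) => i ∉ A),
        (∏ s ∈ insert i A, f s) * (∏ s ∈ (insert i A)ᶜ, (1 - f s))
          * ((insert i A).fold max 0 v) := by
    refine Finset.sum_nbij' (fun A => A.erase i) (fun A => insert i A) ?_ ?_ ?_ ?_ ?_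
    · intro A hA
      simp [Finset.notMem_erase]
    · intro A hA
      simp
    · intro A hA
      simp only [Finset.mem_filter, Finset.mem_univ, true_and, not_not] at hA
      exact Finset.insert_erase hA
    · intro A hA
      simp only [Finset.mem_filter, Finset.mem_univ, true_and] at hA
      exact Finset.erase_insert hA
    · intro A hA
      simp only [Finset.mem_filter, Finset.mem_univ, true_and, not_not] at hA
      rw [Finset.insert_erase hA]
  rw [hbij, ← Finset.sum_add_distrib]
  apply Finset.sum_congr rfl
  intro A hA
  simp only [Finset.mem_filter, Finset.mem_univ, true_and] at hA
  have hfA : ∏ s ∈ A, f s = ∏ s ∈ A, g s := by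
    refine Finset.prod_congr rfl fun s hs => ?_
    have hsi : s ≠ i := by rintro rfl; exact hA hs
    exact Function.update_of_ne hsi _ _
  have hiAc : i ∈ Aᶜ := Finset.mem_compl.2 hA
  have hprodAc : ∏ s ∈ Aᶜ, (1 - f s) = (1 - c) * ∏ s ∈ Aᶜ.erase i, (1 - g s) := by
    rw [← Finset.mul_prod_erase Aᶜ (fun s => 1 - f s) hiAc]
    congr 1
    · rw [hf, Function.update_self]
    · exact Finset.prod_congr rfl fun s hs =>
        congrArg _ (Function.update_of_ne (Finset.ne_of_mem_erase hs) _ _)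
  have hprodIns : ∏ s ∈ insert i A, f s = c * ∏ s ∈ A, g s := by
    rw [Finset.prod_insert hA, hf, Function.update_self, hfA]
  have hcompl : (insert i A)ᶜ = Aᶜ.erase i := Finset.compl_insert
  rw [hfA, hprodAc, hprodIns, hcompl]
  have : ∏ s ∈ Aᶜ.erase i, (1 - f s) = ∏ s ∈ Aᶜ.erase i, (1 - g s) :=
    Finset.prod_congr rfl fun s hs =>
      congrArg _ (Function.update_of_ne (Finset.ne_of_mem_erase hs) _ _)
  rw [this]
  ring

lemma expectedMax_update_mono {g v : Fin m → ℝ} {i : Fin m}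
    (hg : ∀ s, s ≠ i → 0 ≤ g s ∧ g s ≤ 1) (hv : ∀ s, 0 ≤ v s) {a b : ℝ} (hab : a ≤ b) :
    expectedMax (Function.update g i a) v ≤ expectedMax (Function.update g i b) v := by
  rw [expectedMax_update, expectedMax_update]
  apply Finset.sum_le_sum
  intro A hA
  simp only [Finset.mem_filter, Finset.mem_univ, true_and] at hA
  have hC : 0 ≤ (∏ s ∈ A, g s) * ∏ s ∈ Aᶜ.erase i, (1 - g s) := by
    apply mul_nonneg
    · refine Finset.prod_nonneg fun s hs => ?_
      have hsi : s ≠ i := by rintro rfl; exact hA hs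
      exact (hg s hsi).1
    · exact Finset.prod_nonneg fun s hs => by
        linarith [(hg s (Finset.ne_of_mem_erase hs)).2]
  apply mul_le_mul_of_nonneg_left _ hC
  have hM := foldMax_insert_le v A i
  nlinarith [hM]

lemma expectedMax_mono {p q v : Fin m → ℝ} (hq0 : ∀ s, 0 ≤ q s) (hqp : ∀ s, q s ≤ p s)
    (hp1 : ∀ s, p s ≤ 1) (hv : ∀ s, 0 ≤ v s) :
    expectedMax q v ≤ expectedMax p v := by
  have key : ∀ S : Finset (Fin m),
      expectedMax q v ≤ expectedMax (fun i => if i ∈ S then p i else q i) v := by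
    intro S
    induction S using Finset.induction with
    | empty => simp
    | @insert j S hj ih =>
      refine le_trans ih ?_
      have h1 : (fun i => if i ∈ S then p i else q i)
          = Function.update (fun i => if i ∈ S then p i else q i) j (q j) := by
        funext x
        by_cases hx : x = j
        · subst hx; rw [Function.update_self, if_neg hj]
        · rw [Function.update_of_ne hx]
      have h2 : (fun i => if i ∈ insert j S then p i else q i)
          = Function.update (fun i => if i ∈ S then p i else q i) j (p j) := by
        funext x
        by_cases hx : x = j
        · subst hx; rw [Function.update_self, if_pos (Finset.mem_insert_self x S)]
        · rw [Function.update_of_ne hx]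
          simp [Finset.mem_insert, hx]
      rw [h2]
      conv_lhs => rw [h1]
      apply expectedMax_update_mono _ hv (hqp j)
      intro s _
      constructor
      · split
        · exact le_trans (hq0 s) (hqp s)
        · exact hq0 s
      · split
        · exact hp1 s
        · exact le_trans (hqp s) (hp1 s)
  have := key Finset.univ
  simpa using this

/-- The truncated-sum objective at its optimal nonnegative threshold is at most
`1/(1-1/e)` times the expected maximum: some `B ≥ 0` achieves this bound. -/

theorem min_truncated_le_expectedMax {m : ℕ} (p v : Fin m → ℝ)
    (hp0 : ∀ s, 0 ≤ p s) (hp1 : ∀ s, p s ≤ 1) (hv0 : ∀ s, 0 ≤ v s)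
    (hsum : 1 ≤ ∑ s, p s) :
    ∃ B : ℝ, 0 ≤ B ∧
      B + ∑ s, p s * max (v s - B) 0 ≤
        (1 / (1 - 1 / Real.exp 1)) * expectedMax p v := by
  classical
  have hc : 0 < 1 - 1 / Real.exp 1 := by
    have h1 : (1:ℝ) < Real.exp 1 := by
      have := Real.add_one_le_exp 1; linarith
    have h2 : 1 / Real.exp 1 < 1 := by
      rw [div_lt_one (by positivity)]; exact h1
    linarith
  set T := (insert (0:ℝ) (Finset.image v Finset.univ)).filter
    (fun t => 1 ≤ ∑ s ∈ Finset.univ.filter (fun s => t ≤ v s), p s) with hT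
  have h0T : (0:ℝ) ∈ T := by
    refine Finset.mem_filter.2 ⟨Finset.mem_insert_self _ _, ?_⟩
    have heq : Finset.univ.filter (fun s : Fin m => (0:ℝ) ≤ v s) = Finset.univ :=
      Finset.filter_true_of_mem (fun s _ => hv0 s)
    rw [heq]; exact hsum
  set θ := T.max' ⟨0, h0T⟩ with hθdef
  have hθT : θ ∈ T := T.max'_mem _
  have hθ0 : 0 ≤ θ := T.le_max' 0 h0T
  have hH : 1 ≤ ∑ s ∈ Finset.univ.filter (fun s => θ ≤ v s), p s :=
    (Finset.mem_filter.1 hθT).2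
  set G := ∑ s ∈ Finset.univ.filter (fun s => θ < v s), p s with hGdef
  have hG0 : 0 ≤ G := Finset.sum_nonneg fun s _ => hp0 s
  have hG : G ≤ 1 := by
    by_contra hG1
    push_neg at hG1
    have hU : (Finset.univ.filter (fun s => θ < v s)).Nonempty := by
      by_contra h'
      rw [Finset.not_nonempty_iff_eq_empty] at h'
      rw [hGdef, h', Finset.sum_empty] at hG1
      linarith
    have hUim : ((Finset.univ.filter (fun s => θ < v s)).image v).Nonempty :=
      hU.image v
    set θ' := ((Finset.univ.filter (fun s => θ < v s)).image v).min' hUim with hθ'def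
    have hθ'mem : θ' ∈ (Finset.univ.filter (fun s => θ < v s)).image v :=
      Finset.min'_mem _ hUim
    rcases Finset.mem_image.1 hθ'mem with ⟨s0, hs0, hs0v⟩
    have hθθ' : θ < θ' := hs0v ▸ (Finset.mem_filter.1 hs0).2
    have hθ'min : ∀ s, θ < v s → θ' ≤ v s := fun s hs =>
      Finset.min'_le _ _ (Finset.mem_image.2
        ⟨s, Finset.mem_filter.2 ⟨Finset.mem_univ s, hs⟩, rfl⟩)
    have hθ'T : θ' ∈ T := by
      refine Finset.mem_filter.2 ⟨?_, ?_⟩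
      · exact Finset.mem_insert.2 (Or.inr (Finset.mem_image.2
          ⟨s0, Finset.mem_univ s0, hs0v⟩))
      · refine le_trans hG1.le ?_
        rw [hGdef]
        apply Finset.sum_le_sum_of_subset_of_nonneg
        · intro s hs
          rw [Finset.mem_filter] at hs ⊢
          exact ⟨hs.1, hθ'min s hs.2⟩
        · intro s _ _; exact hp0 s
    have := T.le_max' θ' hθ'T
    linarith
  set D := ∑ s ∈ Finset.univ.filter (fun s => v s = θ), p s with hDdef
  have hD0 : 0 ≤ D := Finset.sum_nonneg fun s _ => hp0 s
  have hHsplit : ∑ s ∈ Finset.univ.filter (fun s => θ ≤ v s), p s = G + D := by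
    rw [hGdef, hDdef, ← Finset.sum_union]
    · apply Finset.sum_congr _ (fun s _ => rfl)
      ext x
      simp only [Finset.mem_filter, Finset.mem_univ, true_and, Finset.mem_union]
      constructor
      · intro h
        rcases lt_or_eq_of_le h with h' | h'
        · exact Or.inl h'
        · exact Or.inr h'.symm
      · rintro (h | h)
        · exact h.le
        · exact h.ge
    · rw [Finset.disjoint_left]
      intro a ha hb
      rw [Finset.mem_filter] at ha hb
      rw [hb.2] at ha
      exact lt_irrefl θ ha.2
  set r := if D = 0 then 0 else (1 - G) / D with hrdef
  have hr0 : 0 ≤ r := by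
    rw [hrdef]; split
    · exact le_rfl
    · exact div_nonneg (by linarith) hD0
  have hr1 : r ≤ 1 := by
    rw [hrdef]; split
    · exact zero_le_one
    · rename_i hD
      have hDpos : 0 < D := lt_of_le_of_ne hD0 (Ne.symm hD)
      rw [div_le_one hDpos]
      linarith [hH, hHsplit]
  set q : Fin m → ℝ := fun s => if θ < v s then p s else if v s = θ then r * p s else 0
    with hqdef
  have hq0 : ∀ s, 0 ≤ q s := by
    intro s; rw [hqdef]; dsimp only; split
    · exact hp0 s
    · split
      · exact mul_nonneg hr0 (hp0 s)
      · exact le_rfl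
  have hqp : ∀ s, q s ≤ p s := by
    intro s; rw [hqdef]; dsimp only; split
    · exact le_rfl
    · split
      · calc r * p s ≤ 1 * p s := mul_le_mul_of_nonneg_right hr1 (hp0 s)
          _ = p s := one_mul _
      · exact hp0 s
  have hq1 : ∀ s, q s ≤ 1 := fun s => le_trans (hqp s) (hp1 s)
  have hqsplit : ∀ s, q s
      = (if θ < v s then p s else 0) + (if v s = θ then r * p s else 0) := by
    intro s; rw [hqdef]; dsimp only
    by_cases h1 : θ < v s
    · rw [if_pos h1, if_pos h1, if_neg (by intro h; rw [h] at h1; exact lt_irrefl _ h1),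
        add_zero]
    · rw [if_neg h1, if_neg h1, zero_add]
  have hqsum : ∑ s, q s = 1 := by
    rw [Finset.sum_congr rfl (fun s _ => hqsplit s), Finset.sum_add_distrib,
      ← Finset.sum_filter, ← Finset.sum_filter]
    have hrD : ∑ s ∈ Finset.univ.filter (fun s => v s = θ), r * p s = r * D := by
      rw [hDdef, Finset.mul_sum]
    rw [hrD, ← hGdef, hrdef]
    split
    · rename_i hD
      rw [zero_mul, add_zero]
      rw [hD, add_zero] at hHsplit
      linarith [hH, hHsplit.symm.le]
    · rename_i hD
      rw [div_mul_cancel₀ _ hD]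
      ring
  have hpt : ∀ s, q s * v s = p s * max (v s - θ) 0 + θ * q s := by
    intro s; rw [hqdef]; dsimp only
    by_cases h1 : θ < v s
    · rw [if_pos h1, max_eq_left (by linarith)]; ring
    · rw [if_neg h1]
      by_cases h2 : v s = θ
      · rw [if_pos h2, h2]
        simp [sub_self]
        ring
      · rw [if_neg h2, max_eq_right (by push_neg at h1; linarith)]
        ring
  have hkey : θ + ∑ s, p s * max (v s - θ) 0 = ∑ s, q s * v s := by
    rw [Finset.sum_congr rfl (fun s _ => hpt s), Finset.sum_add_distrib,
      ← Finset.mul_sum, hqsum, mul_one, add_comm]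
  refine ⟨θ, hθ0, ?_⟩
  rw [hkey]
  have hB := expectedMax_ge hq0 hq1 (le_of_eq hqsum) _ v rfl hv0
  have hC := expectedMax_mono hq0 hqp hp1 hv0
  have hmain : (∑ s, q s * v s) * (1 - 1 / Real.exp 1) ≤ expectedMax p v := by
    nlinarith [hB, hC]
  have h := (le_div_iff₀ hc).2 hmain
  rw [one_div, inv_mul_eq_div]
  exact h
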